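/- Let 𝒞 be a polyhedral complex in ℝ^n with all cells pointed. If C₁, C₂ ∈ 𝒞 have nonempty intersection, then K_{C₁ ∩ C₂} = K_{C₁} ∩ K_{C₂}, and K_{C₁ ∩ C₂} is a face of both K_{C₁} and K_{C₂}, where K_C denotes the convex hull of the vertices of C. -/

import Mathlib

open scoped RealInnerProductSpace
open Set

noncomputable section

abbrev E (n : ℕ) := EuclideanSpace ℝ (Fin n)

/-- A polyhedral set: an intersection of finitely many closed half-spaces. -/
def IsPolyhedral {n : ℕ} (P : Set (E n)) : Prop :=
  ∃ (m : ℕ) (w : Fin m → E n) (b : Fin m → ℝ),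
    P = {x | ∀ i, ⟪w i, x⟫ + b i ≤ 0}

/-- The characteristic (recession) cone of `P`. -/
def charCone {n : ℕ} (P : Set (E n)) : Set (E n) := {y | ∀ x ∈ P, x + y ∈ P}

/-- The lineality space of `P`: `charCone P ∩ (−charCone P)`. -/
def linealitySpace {n : ℕ} (P : Set (E n)) : Set (E n) :=
  charCone P ∩ {y | -y ∈ charCone P}

/-- `P` is pointed if its lineality space is trivial. -/
def IsPointed {n : ℕ} (P : Set (E n)) : Prop := linealitySpace P = {0}

/-- `(w, b)` determines a supporting hyperplane of `P`. -/
def IsSupporting {n : ℕ} (w : E n) (b : ℝ) (P : Set (E n)) : Prop :=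
  w ≠ 0 ∧ (∀ x ∈ P, ⟪w, x⟫ + b ≤ 0) ∧ ∃ x ∈ P, ⟪w, x⟫ + b = 0

/-- A face of a polyhedral set: `∅`, `P` itself, or the intersection of `P` with a
supporting hyperplane. -/
def IsFace {n : ℕ} (P F : Set (E n)) : Prop :=
  F = ∅ ∨ F = P ∨ ∃ w b, IsSupporting w b P ∧ F = {x ∈ P | ⟪w, x⟫ + b = 0}

/-- A vertex (0-dimensional face) of `P`. -/
def IsVertex {n : ℕ} (P : Set (E n)) (v : E n) : Prop := IsFace P {v}

/-- `K_P`: the convex hull of the vertices of `P`. -/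
def Kpart {n : ℕ} (P : Set (E n)) : Set (E n) := convexHull ℝ {v | IsVertex P v}

/-- The set of admissible distances from `K_P` to `p` along unit directions of the
characteristic cone. -/
def deltaSet {n : ℕ} (P : Set (E n)) (p : E n) : Set ℝ :=
  {t : ℝ | 0 ≤ t ∧ ∃ x ∈ Kpart P, ∃ y ∈ charCone P, ‖y‖ = 1 ∧ p = x + t • y}

/-- `δ_P(p)`: the minimal distance from `K_P` to `p` along directions in the
characteristic cone. -/
def delta {n : ℕ} (P : Set (E n)) (p : E n) : ℝ := sInf (deltaSet P p)

/-- A polyhedral complex in ℝⁿ: a finite family of nonempty polyhedral sets, closed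
under taking (nonempty) faces, in which any two cells intersect in a common face. -/
def IsPolyComplex {n : ℕ} (cells : Set (Set (E n))) : Prop :=
  cells.Finite ∧
  (∀ C ∈ cells, IsPolyhedral C ∧ C.Nonempty) ∧
  (∀ C ∈ cells, ∀ F, IsFace C F → F.Nonempty → F ∈ cells) ∧
  (∀ C ∈ cells, ∀ D ∈ cells, IsFace C (C ∩ D) ∧ IsFace D (C ∩ D))

lemma inner_affine {n : ℕ} (w : E n) (b : ℝ) {a c : ℝ} (h : a + c = 1) (x y : E n) :
    ⟪w, a • x + c • y⟫ + b = a * (⟪w, x⟫ + b) + c * (⟪w, y⟫ + b) := by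
  rw [inner_add_right, real_inner_smul_right, real_inner_smul_right]
  linear_combination (-b) * h

lemma pair_zero {a c fx fy : ℝ} (ha : 0 < a) (hc : 0 < c) (hx : fx ≤ 0) (hy : fy ≤ 0)
    (h : a * fx + c * fy = 0) : fx = 0 ∧ fy = 0 := by
  constructor <;> nlinarith

lemma convex_of_polyhedral {n : ℕ} {P : Set (E n)} (h : IsPolyhedral P) : Convex ℝ P := by
  obtain ⟨m, w, b, rfl⟩ := h
  intro x hx y hy a c ha hc hac
  intro i
  rw [inner_affine (w i) (b i) hac]
  have h1 := mul_nonpos_of_nonneg_of_nonpos ha (hx i)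
  have h2 := mul_nonpos_of_nonneg_of_nonpos hc (hy i)
  linarith

lemma face_subset {n : ℕ} {P F : Set (E n)} (h : IsFace P F) : F ⊆ P := by
  rcases h with rfl | rfl | ⟨w, b, _, rfl⟩
  · exact empty_subset _
  · exact subset_rfl
  · exact sep_subset _ _

lemma vertex_mem {n : ℕ} {P : Set (E n)} {v : E n} (h : IsVertex P v) : v ∈ P := by
  rcases h with h | h | ⟨w, b, _, h⟩
  · exact absurd h (singleton_ne_empty v)
  · rw [← h]; exact mem_singleton v
  · have : v ∈ ({v} : Set (E n)) := mem_singleton v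
    rw [h] at this; exact this.1

lemma vertex_extreme {n : ℕ} {P : Set (E n)} {v : E n} (h : IsVertex P v) :
    v ∈ P.extremePoints ℝ := by
  refine mem_extremePoints.2 ⟨vertex_mem h, ?_⟩
  intro x hx y hy hseg
  rcases h with h | h | ⟨w, b, ⟨_, hle, _⟩, h⟩
  · exact absurd h (singleton_ne_empty v)
  · rw [← h] at hx hy
    exact ⟨hx, hy⟩
  · have hv : v ∈ {x ∈ P | ⟪w, x⟫ + b = 0} := by rw [← h]; exact mem_singleton v
    obtain ⟨a, c, ha, hc, hac, hsum⟩ := hseg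
    have heq : a * (⟪w, x⟫ + b) + c * (⟪w, y⟫ + b) = 0 := by
      rw [← inner_affine w b hac x y, hsum]; exact hv.2
    obtain ⟨hfx, hfy⟩ := pair_zero ha hc (hle x hx) (hle y hy) heq
    have hx' : x ∈ ({v} : Set (E n)) := by rw [h]; exact ⟨hx, hfx⟩
    have hy' : y ∈ ({v} : Set (E n)) := by rw [h]; exact ⟨hy, hfy⟩
    exact ⟨hx', hy'⟩

lemma extreme_isVertex {n m : ℕ} (w : Fin m → E n) (b : Fin m → ℝ) {v : E n}
    (hv : v ∈ ({x | ∀ i, ⟪w i, x⟫ + b i ≤ 0} : Set (E n)).extremePoints ℝ) :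
    IsVertex {x | ∀ i, ⟪w i, x⟫ + b i ≤ 0} v := by
  classical
  set S : Set (E n) := {x | ∀ i, ⟪w i, x⟫ + b i ≤ 0} with hS
  obtain ⟨hvP, hext⟩ := hv
  have hvP' : ∀ i, ⟪w i, v⟫ + b i ≤ 0 := hvP
  set I : Finset (Fin m) := Finset.univ.filter (fun i => ⟪w i, v⟫ + b i = 0) with hI
  set W : E n := ∑ i ∈ I, w i with hW
  set B : ℝ := ∑ i ∈ I, b i with hB
  have hWx : ∀ x : E n, ⟪W, x⟫ + B = ∑ i ∈ I, (⟪w i, x⟫ + b i) := by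
    intro x
    rw [hW, hB, sum_inner, Finset.sum_add_distrib]
  have hWv : ⟪W, v⟫ + B = 0 := by
    rw [hWx]
    exact Finset.sum_eq_zero fun i hi => (Finset.mem_filter.1 hi).2
  have hle : ∀ x ∈ S, ⟪W, x⟫ + B ≤ 0 := by
    intro x hx
    rw [hWx]
    exact Finset.sum_nonpos fun i _ => hx i
  have hkey : ∀ x, x ∈ S → ⟪W, x⟫ + B = 0 → x = v := by
    intro x hxS hx0
    have htight : ∀ i ∈ I, ⟪w i, x⟫ + b i = 0 := by
      refine (Finset.sum_eq_zero_iff_of_nonpos fun i _ => hxS i).1 ?_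
      rw [← hWx]; exact hx0
    by_contra hxv
    obtain ⟨ε, hε, hεle⟩ : ∃ ε : ℝ, 0 < ε ∧
        ∀ i, i ∉ I → (⟪w i, v⟫ + b i) + ε * ⟪w i, v - x⟫ ≤ 0 := by
      set s : Finset (Fin m) := Finset.univ.filter (fun i => i ∉ I) with hs
      have hci : ∀ i ∈ s, ⟪w i, v⟫ + b i < 0 := by
        intro i hi
        have hni : i ∉ I := (Finset.mem_filter.1 hi).2
        have : ⟪w i, v⟫ + b i ≠ 0 := by
          intro hcon
          exact hni (Finset.mem_filter.2 ⟨Finset.mem_univ i, hcon⟩)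
        exact lt_of_le_of_ne (hvP' i) this
      by_cases hsne : s.Nonempty
      · refine ⟨s.inf' hsne (fun i => (-(⟪w i, v⟫ + b i)) / (|⟪w i, v - x⟫| + 1)), ?_, ?_⟩
        · rw [Finset.lt_inf'_iff]
          intro i hi
          have := hci i hi
          have hd : (0:ℝ) < |⟪w i, v - x⟫| + 1 := by positivity
          exact div_pos (by linarith) hd
        · intro i hni
          have hi : i ∈ s := Finset.mem_filter.2 ⟨Finset.mem_univ i, hni⟩
          set ε := s.inf' hsne (fun i => (-(⟪w i, v⟫ + b i)) / (|⟪w i, v - x⟫| + 1))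
          have hεpos : 0 < ε := by
            rw [Finset.lt_inf'_iff]
            intro j hj
            have := hci j hj
            have hd : (0:ℝ) < |⟪w j, v - x⟫| + 1 := by positivity
            exact div_pos (by linarith) hd
          have h1 : ε ≤ (-(⟪w i, v⟫ + b i)) / (|⟪w i, v - x⟫| + 1) :=
            Finset.inf'_le _ hi
          have hd : (0:ℝ) < |⟪w i, v - x⟫| + 1 := by positivity
          have h2 : ε * (|⟪w i, v - x⟫| + 1) ≤ -(⟪w i, v⟫ + b i) := by
            calc ε * (|⟪w i, v - x⟫| + 1)
                ≤ ((-(⟪w i, v⟫ + b i)) / (|⟪w i, v - x⟫| + 1)) * (|⟪w i, v - x⟫| + 1) := by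
                  exact mul_le_mul_of_nonneg_right h1 (le_of_lt hd)
              _ = -(⟪w i, v⟫ + b i) := div_mul_cancel₀ _ (ne_of_gt hd)
          have h3 : ⟪w i, v - x⟫ ≤ |⟪w i, v - x⟫| := le_abs_self _
          nlinarith [abs_nonneg (⟪w i, v - x⟫)]
      · refine ⟨1, one_pos, fun i hni => ?_⟩
        exact absurd (show i ∈ s from Finset.mem_filter.2 ⟨Finset.mem_univ i, hni⟩)
          (fun hmem => hsne ⟨i, hmem⟩)
    set z : E n := v + ε • (v - x) with hz
    have hzS : z ∈ S := by
      intro i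
      have hcomp : ⟪w i, z⟫ + b i = (⟪w i, v⟫ + b i) + ε * ⟪w i, v - x⟫ := by
        rw [hz, inner_add_right, real_inner_smul_right]
        ring
      by_cases hi : i ∈ I
      · have h1 : ⟪w i, v⟫ + b i = 0 := (Finset.mem_filter.1 hi).2
        have h2 : ⟪w i, x⟫ + b i = 0 := htight i hi
        have h3 : ⟪w i, v - x⟫ = 0 := by
          rw [inner_sub_right]
          linarith
        rw [hcomp, h1, h3]
        simp
      · rw [hcomp]
        exact hεle i hi
    have hvseg : v ∈ openSegment ℝ x z := by
      refine ⟨ε / (1 + ε), 1 / (1 + ε), by positivity, by positivity, by field_simp; ring, ?_⟩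
      rw [hz]
      match_scalars <;> (field_simp; try ring)
    exact hxv (hext hxS hzS hvseg)
  by_cases hW0 : W = 0
  · have hB0 : B = 0 := by
      have := hWv
      rw [hW0] at this
      simpa using this
    have hPv : S = {v} := by
      apply Subset.antisymm
      · intro x hx
        have : x = v := hkey x hx (by rw [hW0, hB0]; simp)
        exact this ▸ mem_singleton v
      · intro x hx
        rw [mem_singleton_iff.1 hx]; exact hvP
    exact Or.inr (Or.inl hPv.symm)
  · refine Or.inr (Or.inr ⟨W, B, ⟨hW0, hle, ⟨v, hvP, hWv⟩⟩, ?_⟩)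
    apply Subset.antisymm
    · intro x hx
      rw [mem_singleton_iff.1 hx]
      exact ⟨hvP, hWv⟩
    · rintro x ⟨hxS, hx0⟩
      exact mem_singleton_iff.2 (hkey x hxS hx0)

lemma extremePoints_of_subset {n : ℕ} {F P : Set (E n)} {v : E n} (hFP : F ⊆ P)
    (hv : v ∈ P.extremePoints ℝ) (hvF : v ∈ F) : v ∈ F.extremePoints ℝ :=
  ⟨hvF, fun x hx y hy hs => hv.2 (hFP hx) (hFP hy) hs⟩

lemma face_extreme_up {n : ℕ} {P F : Set (E n)} {v : E n} (hF : IsFace P F)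
    (hv : v ∈ F.extremePoints ℝ) : v ∈ P.extremePoints ℝ := by
  rcases hF with rfl | rfl | ⟨w, b, ⟨_, hle, _⟩, rfl⟩
  · exact absurd hv.1 (notMem_empty v)
  · exact hv
  · obtain ⟨⟨hvP, hveq⟩, hext⟩ := hv
    refine ⟨hvP, fun x hx y hy hs => ?_⟩
    obtain ⟨a, c, ha, hc, hac, hsum⟩ := hs
    have heq : a * (⟪w, x⟫ + b) + c * (⟪w, y⟫ + b) = 0 := by
      rw [← inner_affine w b hac x y, hsum]; exact hveq
    obtain ⟨hfx, hfy⟩ := pair_zero ha hc (hle x hx) (hle y hy) heq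
    exact hext ⟨hx, hfx⟩ ⟨hy, hfy⟩ ⟨a, c, ha, hc, hac, hsum⟩

lemma vertex_of_face_vertex {n : ℕ} {P F : Set (E n)} {v : E n} (hface : IsFace P F)
    (hP : IsPolyhedral P) (hv : IsVertex F v) : IsVertex P v := by
  obtain ⟨m, w, b, rfl⟩ := hP
  exact extreme_isVertex w b (face_extreme_up hface (vertex_extreme hv))

lemma vertex_of_mem_face {n : ℕ} {P F : Set (E n)} {v : E n} (hface : IsFace P F)
    (hFpoly : IsPolyhedral F) (hv : IsVertex P v) (hvF : v ∈ F) : IsVertex F v := by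
  obtain ⟨m, w, b, rfl⟩ := hFpoly
  exact extreme_isVertex w b
    (extremePoints_of_subset (face_subset hface) (vertex_extreme hv) hvF)

lemma hull_inter_hyperplane {n : ℕ} {V : Set (E n)} (w : E n) (b : ℝ)
    (hV : ∀ v ∈ V, ⟪w, v⟫ + b ≤ 0) {p : E n} (hp : p ∈ convexHull ℝ V)
    (hp0 : ⟪w, p⟫ + b = 0) : p ∈ convexHull ℝ {v ∈ V | ⟪w, v⟫ + b = 0} := by
  classical
  rw [convexHull_eq] at hp
  obtain ⟨ι, t, a, z, ha0, ha1, hz, hcm⟩ := hp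
  set t' := t.filter (fun i => 0 < a i) with ht'
  have hsub : t' ⊆ t := Finset.filter_subset _ _
  have hsum' : ∑ i ∈ t', a i = 1 := by
    rw [← ha1]
    exact Finset.sum_filter_of_ne fun i hi hne => lt_of_le_of_ne (ha0 i hi) (Ne.symm hne)
  have hcm' : p = ∑ i ∈ t', a i • z i := by
    rw [← hcm, Finset.centerMass, ha1, inv_one, one_smul]
    refine (Finset.sum_filter_of_ne fun i hi hne => ?_).symm
    by_contra hia
    push_neg at hia
    have : a i = 0 := le_antisymm hia (ha0 i hi)
    exact hne (by rw [this, zero_smul])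
  have hfp : ∑ i ∈ t', a i * (⟪w, z i⟫ + b) = 0 := by
    have hexp : ⟪w, p⟫ + b = ∑ i ∈ t', a i * (⟪w, z i⟫ + b) := by
      rw [hcm', inner_sum]
      simp only [real_inner_smul_right, mul_add]
      rw [Finset.sum_add_distrib, ← Finset.sum_mul, hsum', one_mul]
    rw [← hexp]; exact hp0
  have hzero : ∀ i ∈ t', ⟪w, z i⟫ + b = 0 := by
    intro i hi
    have hall := (Finset.sum_eq_zero_iff_of_nonpos fun j hj =>
      mul_nonpos_of_nonneg_of_nonpos (ha0 j (hsub hj)) (hV (z j) (hz j (hsub hj)))).1 hfp i hi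
    have hai : (0:ℝ) < a i := (Finset.mem_filter.1 hi).2
    exact (mul_eq_zero.1 hall).resolve_left (ne_of_gt hai)
  have hmem := t'.centerMass_mem_convexHull (w := a) (z := z)
    (fun i hi => ha0 i (hsub hi)) (by rw [hsum']; exact one_pos)
    (fun i hi => show z i ∈ {v ∈ V | ⟪w, v⟫ + b = 0} from ⟨hz i (hsub hi), hzero i hi⟩)
  rwa [Finset.centerMass, hsum', inv_one, one_smul, ← hcm'] at hmem

lemma kpart_subset {n : ℕ} {P : Set (E n)} (hP : IsPolyhedral P) : Kpart P ⊆ P :=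
  convexHull_min (fun _ hv => vertex_mem hv) (convex_of_polyhedral hP)

lemma kpart_face_eq {n : ℕ} {P F : Set (E n)} (hP : IsPolyhedral P)
    (hFpoly : IsPolyhedral F) (hface : IsFace P F) : Kpart F = Kpart P ∩ F := by
  apply Subset.antisymm
  · intro x hx
    exact ⟨convexHull_mono (fun v hv => vertex_of_face_vertex hface hP hv) hx,
      kpart_subset hFpoly hx⟩
  · have hface' := hface
    rcases hface with rfl | rfl | ⟨w, b, ⟨hw0, hle, hex⟩, hFdef⟩
    · rintro p ⟨_, hpF⟩
      exact absurd hpF (notMem_empty p)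
    · rintro p ⟨hpK, _⟩
      exact hpK
    · subst hFdef
      rintro p ⟨hpK, hpF⟩
      have hVle : ∀ v ∈ {v | IsVertex P v}, ⟪w, v⟫ + b ≤ 0 := fun v hv => hle v (vertex_mem hv)
      have h1 := hull_inter_hyperplane w b hVle hpK hpF.2
      refine convexHull_mono ?_ h1
      rintro v ⟨hvV, hveq⟩
      exact vertex_of_mem_face hface' hFpoly hvV ⟨vertex_mem hvV, hveq⟩

lemma kpart_isFace {n : ℕ} {P F : Set (E n)} (hP : IsPolyhedral P)
    (hFpoly : IsPolyhedral F) (hface : IsFace P F) : IsFace (Kpart P) (Kpart F) := by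
  have hEq := kpart_face_eq hP hFpoly hface
  rcases hface with rfl | rfl | ⟨w, b, ⟨hw0, hle, hex⟩, hFdef⟩
  · exact Or.inl (by rw [hEq, inter_empty])
  · exact Or.inr (Or.inl rfl)
  · subst hFdef
    rcases eq_empty_or_nonempty (Kpart {x ∈ P | ⟪w, x⟫ + b = 0}) with h | ⟨x₀, hx₀⟩
    · exact Or.inl h
    · have hx₀' : x₀ ∈ Kpart P ∩ {x ∈ P | ⟪w, x⟫ + b = 0} := hEq ▸ hx₀
      refine Or.inr (Or.inr ⟨w, b, ⟨hw0, fun x hx => hle x (kpart_subset hP hx),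
        ⟨x₀, hx₀'.1, hx₀'.2.2⟩⟩, ?_⟩)
      rw [hEq]
      ext x
      simp only [mem_inter_iff, mem_sep_iff, mem_setOf_eq]
      exact ⟨fun ⟨h1, _, h3⟩ => ⟨h1, h3⟩, fun ⟨h1, h2⟩ => ⟨h1, kpart_subset hP h1, h2⟩⟩

/-- In a pointed polyhedral complex, the compact part of an intersection of two
cells is the intersection of their compact parts, and is a face of each. -/
theorem Kpart_inter {n : ℕ} (cells : Set (Set (E n)))
    (hcx : IsPolyComplex cells) (hptd : ∀ C ∈ cells, IsPointed C)
    (C₁ C₂ : Set (E n)) (h₁ : C₁ ∈ cells) (h₂ : C₂ ∈ cells)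
    (hne : (C₁ ∩ C₂).Nonempty) :
    Kpart (C₁ ∩ C₂) = Kpart C₁ ∩ Kpart C₂ ∧
    IsFace (Kpart C₁) (Kpart (C₁ ∩ C₂)) ∧
    IsFace (Kpart C₂) (Kpart (C₁ ∩ C₂)) := by
  obtain ⟨_, hpoly, hclosed, hpair⟩ := hcx
  have hF₁ : IsFace C₁ (C₁ ∩ C₂) := (hpair C₁ h₁ C₂ h₂).1
  have hF₂ : IsFace C₂ (C₁ ∩ C₂) := (hpair C₁ h₁ C₂ h₂).2
  have hFmem : C₁ ∩ C₂ ∈ cells := hclosed C₁ h₁ _ hF₁ hne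
  have hFpoly : IsPolyhedral (C₁ ∩ C₂) := (hpoly _ hFmem).1
  have hP₁ : IsPolyhedral C₁ := (hpoly C₁ h₁).1
  have hP₂ : IsPolyhedral C₂ := (hpoly C₂ h₂).1
  have e₁ := kpart_face_eq hP₁ hFpoly hF₁
  have e₂ := kpart_face_eq hP₂ hFpoly hF₂
  refine ⟨?_, kpart_isFace hP₁ hFpoly hF₁, kpart_isFace hP₂ hFpoly hF₂⟩
  apply Set.Subset.antisymm
  · intro x hx
    exact ⟨(e₁ ▸ hx : x ∈ Kpart C₁ ∩ (C₁ ∩ C₂)).1, (e₂ ▸ hx : x ∈ Kpart C₂ ∩ (C₁ ∩ C₂)).1⟩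
  · rintro x ⟨hx1, hx2⟩
    have hxF : x ∈ C₁ ∩ C₂ := ⟨kpart_subset hP₁ hx1, kpart_subset hP₂ hx2⟩
    rw [e₁]
    exact ⟨hx1, hxF⟩
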